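/- Let G be a finite group and N a normal subgroup of G. Define m(G) to be the largest integer m ≥ 5 such that G has a section isomorphic to the alternating group A_m (i.e., there exist subgroups K ⊴ H ≤ G with H/K ≅ A_m), and m(G) = 0 if no such section exists. Then m(G) = max(m(N), m(G/N)). -/

import Mathlib

namespace MSecAux

open Equiv Equiv.Perm Subgroup Fintype Function

variable {α : Type*} [Fintype α] [DecidableEq α]

/-- An even permutation with support of size 4 is an involution (its type is 2+2). -/
lemma sq_eq_one_of_card_support_eq_four {σ : Perm α} (hsign : Perm.sign σ = 1)
    (h4 : σ.support.card = 4) : σ * σ = 1 := by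
  have hsum : σ.cycleType.sum = 4 := by rw [Equiv.Perm.sum_cycleType, h4]
  have hcard : Multiset.card σ.cycleType = 2 := by
    have heven : Even (σ.cycleType.sum + Multiset.card σ.cycleType) := by
      rw [Equiv.Perm.sign_of_cycleType] at hsign
      rwa [neg_one_pow_eq_one_iff_even (by decide)] at hsign
    have hle : Multiset.card σ.cycleType • 2 ≤ σ.cycleType.sum :=
      Multiset.card_nsmul_le_sum (fun x hx => Equiv.Perm.two_le_of_mem_cycleType hx)
    have hne : σ.cycleType ≠ 0 := by
      intro h; rw [h] at hsum; simp at hsum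
    have hpos : 0 < Multiset.card σ.cycleType := by
      rwa [Multiset.card_pos]
    rw [smul_eq_mul] at hle
    obtain ⟨k, hk⟩ := heven
    omega
  have h2 : ∀ n ∈ σ.cycleType, n = 2 := by
    intro n hn
    have h2n := Equiv.Perm.two_le_of_mem_cycleType hn
    obtain ⟨t, ht⟩ := Multiset.exists_cons_of_mem hn
    rw [ht, Multiset.sum_cons] at hsum
    rw [ht, Multiset.card_cons] at hcard
    obtain ⟨m, hm⟩ := Multiset.card_eq_one.mp (show Multiset.card t = 1 by omega)
    have h2m : 2 ≤ m := Equiv.Perm.two_le_of_mem_cycleType (by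
      rw [ht, hm]
      exact Multiset.mem_cons_of_mem (Multiset.mem_singleton_self m))
    rw [hm, Multiset.sum_singleton] at hsum
    omega
  have hdvd : orderOf σ ∣ 2 := by
    rw [← Equiv.Perm.lcm_cycleType]
    exact Multiset.lcm_dvd.mpr (fun n hn => by rw [h2 n hn])
  rw [← pow_two]
  exact orderOf_dvd_iff_pow_eq_one.mp hdvd

/-- Every nontrivial normal subgroup of `alternatingGroup α`, `5 ≤ |α|`, contains a 3-cycle. -/
lemma exists_isThreeCycle_of_mem_normal (h5 : 5 ≤ Fintype.card α)
    (N : Subgroup (alternatingGroup α)) [hN : N.Normal]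
    (g₀ : alternatingGroup α) (hg₀ : g₀ ∈ N) (hg₀1 : g₀ ≠ 1) :
    ∃ h ∈ N, Equiv.Perm.IsThreeCycle (h : Perm α) := by
  suffices H : ∀ k (g : alternatingGroup α), g ∈ N → g ≠ 1 →
      (g : Perm α).support.card = k → ∃ h ∈ N, Equiv.Perm.IsThreeCycle (h : Perm α) from
    H _ g₀ hg₀ hg₀1 rfl
  intro k
  induction k using Nat.strong_induction_on with
  | _ k ih =>
  intro g hg hg1 hk
  by_cases h3 : Equiv.Perm.IsThreeCycle (g : Perm α)
  · exact ⟨g, hg, h3⟩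
  obtain ⟨σ, hσg⟩ : ∃ σ : Perm α, (g : Perm α) = σ := ⟨_, rfl⟩
  rw [hσg] at h3 hk
  have hinv : ∀ x y : α, σ x = y → σ⁻¹ y = x := fun x y h => by
    rw [← h, Equiv.Perm.inv_def, Equiv.symm_apply_apply]
  have hσ1 : σ ≠ 1 := fun h => hg1 (Subtype.ext (hσg.trans h))
  have hsign : Perm.sign σ = 1 := by
    rw [← hσg]; exact Equiv.Perm.mem_alternatingGroup.mp g.2
  have hcard_ne2 : σ.support.card ≠ 2 := by
    intro h2
    obtain ⟨x, y, hxy, hsw⟩ := Equiv.Perm.card_support_eq_two.mp h2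
    rw [hsw, Equiv.Perm.sign_swap hxy] at hsign
    exact absurd hsign (by decide)
  have hcard_ne3 : σ.support.card ≠ 3 := fun h => h3 (card_support_eq_three_iff.mp h)
  -- reduce to constructing a nontrivial element of `N` with strictly smaller support
  suffices hρ : ∃ ρ' : alternatingGroup α, ρ' ∈ N ∧ ρ' ≠ 1 ∧
      ((ρ' : Perm α)).support.card < k from by
    obtain ⟨ρ', h1, h2, h3'⟩ := hρ
    exact ih _ h3' ρ' h1 h2 rfl
  -- the commutator construction
  have key : ∀ c d e : α, c ≠ d → c ≠ e → d ≠ e →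
      ∃ ρ' : alternatingGroup α, ρ' ∈ N ∧
        ((ρ' : Perm α)) = (Equiv.swap c e * Equiv.swap c d) * σ *
          (Equiv.swap c e * Equiv.swap c d)⁻¹ * σ⁻¹ := by
    intro c d e hcd hce hde
    have hτs : Perm.sign (Equiv.swap c e * Equiv.swap c d) = 1 := by
      rw [map_mul, Equiv.Perm.sign_swap hce, Equiv.Perm.sign_swap hcd]
      decide
    refine ⟨(⟨_, Equiv.Perm.mem_alternatingGroup.mpr hτs⟩ : alternatingGroup α) * g *
      (⟨_, Equiv.Perm.mem_alternatingGroup.mpr hτs⟩ : alternatingGroup α)⁻¹ * g⁻¹, ?_, ?_⟩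
    · exact Subgroup.mul_mem _ (hN.conj_mem g hg _) (Subgroup.inv_mem _ hg)
    · push_cast [hσg]
      rfl
  by_cases hs2 : σ * σ = 1
  · -- Case B : `σ` is an involution
    have hsqapp : ∀ x, σ (σ x) = x := fun x => by
      have := Equiv.ext_iff.mp hs2 x
      simpa [Equiv.Perm.mul_apply] using this
    obtain ⟨a, haS⟩ : σ.support.Nonempty :=
      Finset.nonempty_iff_ne_empty.mpr (fun h => hσ1 (Equiv.Perm.support_eq_empty_iff.mp h))
    have ha : σ a ≠ a := Equiv.Perm.mem_support.mp haS
    obtain ⟨b, hb⟩ : ∃ b, σ a = b := ⟨_, rfl⟩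
    have hσb : σ b = a := by rw [← hb, hsqapp]
    have hab : a ≠ b := fun h => ha (by rw [hb, ← h])
    have hbS : b ∈ σ.support := Equiv.Perm.mem_support.mpr (by rw [hσb]; exact fun h => hab h)
    have habs : ({a, b} : Finset α) ⊆ σ.support := by
      intro x hx
      rcases Finset.mem_insert.mp hx with rfl | hx
      · exact haS
      · rw [Finset.mem_singleton] at hx; subst hx; exact hbS
    have h2 : ({a, b} : Finset α).card = 2 := by
      rw [Finset.card_insert_of_notMem (by simpa using hab), Finset.card_singleton]
    have hcard4 : 4 ≤ σ.support.card := by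
      have hle := Finset.card_le_card habs
      omega
    obtain ⟨c, hc'⟩ : (σ.support \ ({a, b} : Finset α)).Nonempty := by
      rw [← Finset.card_pos, Finset.card_sdiff_of_subset habs, h2]
      omega
    rw [Finset.mem_sdiff, Finset.mem_insert, Finset.mem_singleton] at hc'
    push_neg at hc'
    obtain ⟨hcS, hca, hcb⟩ := hc'
    have hc_s : σ c ≠ c := Equiv.Perm.mem_support.mp hcS
    obtain ⟨d, hd⟩ : ∃ d, σ c = d := ⟨_, rfl⟩
    have hσd : σ d = c := by rw [← hd, hsqapp]
    have hcd : c ≠ d := fun h => hc_s (by rw [hd, ← h])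
    have hda : d ≠ a := fun h => hcb (by rw [← hσd, h, hb])
    have hdb : d ≠ b := fun h => hca (by rw [← hσd, h, hσb])
    have hdS : d ∈ σ.support := Equiv.Perm.mem_support.mpr (by rw [hσd]; exact fun h => hcd h)
    obtain ⟨e, he⟩ : (Finset.univ \ ({a, b, c, d} : Finset α)).Nonempty := by
      rw [← Finset.card_pos, Finset.card_sdiff_of_subset (Finset.subset_univ _)]
      have h1 := Finset.card_insert_le a ({b, c, d} : Finset α)
      have h2' := Finset.card_insert_le b ({c, d} : Finset α)
      have h3' := Finset.card_insert_le c ({d} : Finset α)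
      have h4 : ({d} : Finset α).card = 1 := Finset.card_singleton d
      have hu : (Finset.univ : Finset α).card = Fintype.card α := Finset.card_univ
      omega
    rw [Finset.mem_sdiff, Finset.mem_insert, Finset.mem_insert, Finset.mem_insert,
      Finset.mem_singleton] at he
    push_neg at he
    obtain ⟨-, hea, heb, hec, hed⟩ := he
    have hce : c ≠ e := fun h => hec h.symm
    have hde : d ≠ e := fun h => hed h.symm
    obtain ⟨ρ', hρ'N, hρ'⟩ := key c d e hcd hce hde
    obtain ⟨τ, hτ⟩ : ∃ τ : Perm α, Equiv.swap c e * Equiv.swap c d = τ := ⟨_, rfl⟩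
    rw [hτ] at hρ'
    have τapp : ∀ x, x ≠ c → x ≠ d → x ≠ e → τ x = x := fun x h1 h2 h3 => by
      rw [← hτ, Equiv.Perm.mul_apply, Equiv.swap_apply_of_ne_of_ne h1 h2,
        Equiv.swap_apply_of_ne_of_ne h1 h3]
    have τc : τ c = d := by
      rw [← hτ, Equiv.Perm.mul_apply, Equiv.swap_apply_left,
        Equiv.swap_apply_of_ne_of_ne (fun h => hcd h.symm) hde]
    have τd : τ d = e := by
      rw [← hτ, Equiv.Perm.mul_apply, Equiv.swap_apply_right, Equiv.swap_apply_left]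
    have τinv : ∀ x y : α, τ x = y → τ⁻¹ y = x := fun x y h => by
      rw [← h, Equiv.Perm.inv_def, Equiv.symm_apply_apply]
    have hρapp : ∀ x, (ρ' : Perm α) x = τ (σ (τ⁻¹ (σ⁻¹ x))) := fun x => by
      rw [hρ']; simp [Equiv.Perm.mul_apply]
    have hρa : (ρ' : Perm α) a = a := by
      rw [hρapp, hinv b a hσb,
        τinv b b (τapp b (fun h => hcb h.symm) (fun h => hdb h.symm) (fun h => heb h.symm)),
        hσb, τapp a (fun h => hca h.symm) (fun h => hda h.symm) (fun h => hea h.symm)]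
    have hρb : (ρ' : Perm α) b = b := by
      rw [hρapp, hinv a b hb,
        τinv a a (τapp a (fun h => hca h.symm) (fun h => hda h.symm) (fun h => hea h.symm)),
        hb, τapp b (fun h => hcb h.symm) (fun h => hdb h.symm) (fun h => heb h.symm)]
    have hρc : (ρ' : Perm α) c = e := by
      rw [hρapp, hinv d c hσd, τinv c d τc, hd, τd]
    have hρ1 : ρ' ≠ 1 := by
      intro h
      rw [h] at hρc
      simp at hρc
      exact hce hρc
    refine ⟨ρ', hρ'N, hρ1, ?_⟩
    have hsub : (ρ' : Perm α).support ⊆ ((insert e σ.support).erase a).erase b := by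
      intro x hx
      have hxmove : (ρ' : Perm α) x ≠ x := Equiv.Perm.mem_support.mp hx
      rw [Finset.mem_erase, Finset.mem_erase, Finset.mem_insert]
      refine ⟨fun h => hxmove (h ▸ hρb), fun h => hxmove (h ▸ hρa), ?_⟩
      by_contra hmem
      push_neg at hmem
      obtain ⟨hxe, hxS⟩ := hmem
      have hxfix : σ x = x := by
        by_contra h'
        exact hxS (Equiv.Perm.mem_support.mpr h')
      have hxc : x ≠ c := fun h => hxS (h ▸ hcS)
      have hxd : x ≠ d := fun h => hxS (h ▸ hdS)
      exact hxmove (by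
        rw [hρapp, hinv x x hxfix, τinv x x (τapp x hxc hxd hxe), hxfix, τapp x hxc hxd hxe])
    have hbmem : b ∈ (insert e σ.support).erase a :=
      Finset.mem_erase.mpr ⟨fun h => hab h.symm, Finset.mem_insert_of_mem hbS⟩
    have hamem : a ∈ insert e σ.support := Finset.mem_insert_of_mem haS
    have hce1 := Finset.card_erase_of_mem hbmem
    have hce2 := Finset.card_erase_of_mem hamem
    have hci := Finset.card_insert_le e σ.support
    have := Finset.card_le_card hsub
    omega
  · -- Case A : `σ` has a cycle of length at least 3
    obtain ⟨a, ha2⟩ : ∃ a, σ (σ a) ≠ a := by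
      by_contra h
      push_neg at h
      exact hs2 (Equiv.ext fun x => by rw [Equiv.Perm.mul_apply, h x, Equiv.Perm.one_apply])
    obtain ⟨b, hb⟩ : ∃ b, σ a = b := ⟨_, rfl⟩
    obtain ⟨c, hc⟩ : ∃ c, σ b = c := ⟨_, rfl⟩
    have hca : c ≠ a := by rw [← hc, ← hb]; exact ha2
    have hab : a ≠ b := fun h => hca (by rw [← hc, ← h, hb, h])
    have hbc : b ≠ c := by
      intro h
      have hfix : σ b = b := by rw [hc, ← h]
      exact hab (σ.injective (hb.trans hfix.symm))
    have haS : a ∈ σ.support := Equiv.Perm.mem_support.mpr (by rw [hb]; exact fun h => hab h.symm)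
    have hbS : b ∈ σ.support := Equiv.Perm.mem_support.mpr (by rw [hc]; exact fun h => hbc h.symm)
    have hcS : c ∈ σ.support := Equiv.Perm.mem_support.mpr
      (fun h => hbc (σ.injective (hc.trans h.symm)))
    have habcs : ({a, b, c} : Finset α) ⊆ σ.support := by
      intro x hx
      rcases Finset.mem_insert.mp hx with rfl | hx
      · exact haS
      rcases Finset.mem_insert.mp hx with rfl | hx
      · exact hbS
      rw [Finset.mem_singleton] at hx; subst hx; exact hcS
    have h3card : ({a, b, c} : Finset α).card = 3 := by
      have hanm : a ∉ ({b, c} : Finset α) := by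
        simp only [Finset.mem_insert, Finset.mem_singleton]
        push_neg
        exact ⟨hab, fun h => hca h.symm⟩
      have hbnm : b ∉ ({c} : Finset α) := by simpa using hbc
      rw [Finset.card_insert_of_notMem hanm, Finset.card_insert_of_notMem hbnm,
        Finset.card_singleton]
    have hcard_ne4 : σ.support.card ≠ 4 :=
      fun h => hs2 (sq_eq_one_of_card_support_eq_four hsign h)
    have hcard5 : 5 ≤ σ.support.card := by
      have hle := Finset.card_le_card habcs
      omega
    obtain ⟨d, hd', e, he', hde⟩ :
        ∃ d ∈ σ.support \ ({a, b, c} : Finset α), ∃ e ∈ σ.support \ ({a, b, c} : Finset α),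
          d ≠ e := by
      apply Finset.one_lt_card.mp
      rw [Finset.card_sdiff_of_subset habcs, h3card]
      omega
    rw [Finset.mem_sdiff, Finset.mem_insert, Finset.mem_insert, Finset.mem_singleton] at hd' he'
    push_neg at hd' he'
    obtain ⟨hdS, hda, hdb, hdc⟩ := hd'
    obtain ⟨heS, hea, heb, hec⟩ := he'
    have hcd : c ≠ d := fun h => hdc h.symm
    have hce : c ≠ e := fun h => hec h.symm
    obtain ⟨ρ', hρ'N, hρ'⟩ := key c d e hcd hce hde
    obtain ⟨τ, hτ⟩ : ∃ τ : Perm α, Equiv.swap c e * Equiv.swap c d = τ := ⟨_, rfl⟩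
    rw [hτ] at hρ'
    have τapp : ∀ x, x ≠ c → x ≠ d → x ≠ e → τ x = x := fun x h1 h2 h3 => by
      rw [← hτ, Equiv.Perm.mul_apply, Equiv.swap_apply_of_ne_of_ne h1 h2,
        Equiv.swap_apply_of_ne_of_ne h1 h3]
    have τc : τ c = d := by
      rw [← hτ, Equiv.Perm.mul_apply, Equiv.swap_apply_left,
        Equiv.swap_apply_of_ne_of_ne (fun h => hcd h.symm) hde]
    have τinv : ∀ x y : α, τ x = y → τ⁻¹ y = x := fun x y h => by
      rw [← h, Equiv.Perm.inv_def, Equiv.symm_apply_apply]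
    have hρapp : ∀ x, (ρ' : Perm α) x = τ (σ (τ⁻¹ (σ⁻¹ x))) := fun x => by
      rw [hρ']; simp [Equiv.Perm.mul_apply]
    have hρb : (ρ' : Perm α) b = b := by
      rw [hρapp, hinv a b hb,
        τinv a a (τapp a (fun h => hca h.symm) (fun h => hda h.symm) (fun h => hea h.symm)),
        hb, τapp b hbc (fun h => hdb h.symm) (fun h => heb h.symm)]
    have hρc : (ρ' : Perm α) c = d := by
      rw [hρapp, hinv b c hc,
        τinv b b (τapp b hbc (fun h => hdb h.symm) (fun h => heb h.symm)), hc, τc]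
    have hρ1 : ρ' ≠ 1 := by
      intro h
      rw [h] at hρc
      simp at hρc
      exact hcd hρc
    refine ⟨ρ', hρ'N, hρ1, ?_⟩
    have hsub : (ρ' : Perm α).support ⊆ σ.support.erase b := by
      intro x hx
      have hxmove : (ρ' : Perm α) x ≠ x := Equiv.Perm.mem_support.mp hx
      rw [Finset.mem_erase]
      refine ⟨fun h => hxmove (h ▸ hρb), ?_⟩
      by_contra hxS
      have hxfix : σ x = x := by
        by_contra h'
        exact hxS (Equiv.Perm.mem_support.mpr h')
      have hxc : x ≠ c := fun h => hxS (h ▸ hcS)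
      have hxd : x ≠ d := fun h => hxS (h ▸ hdS)
      have hxe : x ≠ e := fun h => hxS (h ▸ heS)
      exact hxmove (by
        rw [hρapp, hinv x x hxfix, τinv x x (τapp x hxc hxd hxe), hxfix, τapp x hxc hxd hxe])
    have hce1 := Finset.card_erase_of_mem hbS
    have := Finset.card_le_card hsub
    omega

theorem alternatingGroup.isSimpleGroup_of_five_le (h5 : 5 ≤ Fintype.card α) :
    IsSimpleGroup (alternatingGroup α) := by
  haveI : Nontrivial (alternatingGroup α) :=
    alternatingGroup.nontrivial_of_three_le_card (by rw [Nat.card_eq_fintype_card]; omega)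
  constructor
  intro N hN
  by_cases hb : N = ⊥
  · exact Or.inl hb
  right
  haveI := hN
  obtain ⟨g, hgN, hg1⟩ : ∃ g ∈ N, g ≠ 1 := by
    rw [Subgroup.eq_bot_iff_forall] at hb
    push_neg at hb
    exact hb
  obtain ⟨h, hhN, hh3⟩ := exists_isThreeCycle_of_mem_normal h5 N g hgN hg1
  have hcl := hh3.alternating_normalClosure (by rw [Nat.card_eq_fintype_card]; exact h5)
  rw [eq_top_iff, ← hcl]
  apply Subgroup.normalClosure_le_normal
  rw [Set.singleton_subset_iff]
  have : (⟨(h : Perm α), hh3.mem_alternatingGroup⟩ : alternatingGroup α) = h := Subtype.ext rfl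
  rw [this]
  exact hhN

end MSecAux

section MSecMain
open MSecAux

open Function

theorem alt_simple {m : ℕ} (h5 : 5 ≤ m) : IsSimpleGroup (alternatingGroup (Fin m)) :=
  alternatingGroup.isSimpleGroup_of_five_le (by rw [Fintype.card_fin]; exact h5)

def SecSet (G : Type*) [Group G] : Set ℕ :=
  {m | 5 ≤ m ∧ ∃ (H : Subgroup G) (φ : H →* alternatingGroup (Fin m)), Surjective φ}

noncomputable def mSec (G : Type) [Group G] : ℕ :=
  sSup {m | 5 ≤ m ∧ ∃ (H : Subgroup G) (K : Subgroup H), ∃ hn : K.Normal,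
    Nonempty (letI := hn; (H ⧸ K) ≃* alternatingGroup (Fin m))}

lemma mSec_eq (G : Type) [Group G] : mSec G = sSup (SecSet G) := by
  unfold mSec SecSet
  congr 1
  ext m
  simp only [Set.mem_setOf_eq, and_congr_right_iff]
  intro _
  constructor
  · rintro ⟨H, K, hn, ⟨e⟩⟩
    letI := hn
    refine ⟨H, e.toMonoidHom.comp (QuotientGroup.mk' K), ?_⟩
    exact e.surjective.comp (QuotientGroup.mk'_surjective K)
  · rintro ⟨H, φ, hφ⟩
    exact ⟨H, φ.ker, inferInstance, ⟨QuotientGroup.quotientKerEquivOfSurjective φ hφ⟩⟩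

lemma SecSet_subset_of_injective {G G' : Type*} [Group G] [Group G'] (f : G →* G')
    (hf : Injective f) : SecSet G ⊆ SecSet G' := by
  rintro m ⟨h5, H, φ, hφ⟩
  refine ⟨h5, H.map f, ?_, ?_⟩
  · exact φ.comp ((H.equivMapOfInjective f hf).symm.toMonoidHom)
  · exact hφ.comp (H.equivMapOfInjective f hf).symm.surjective

lemma SecSet_subset_of_surjective {G G' : Type*} [Group G] [Group G'] (f : G →* G')
    (hf : Surjective f) : SecSet G' ⊆ SecSet G := by
  rintro m ⟨h5, H, φ, hφ⟩
  refine ⟨h5, H.comap f, φ.comp (f.subgroupComap H), hφ.comp ?_⟩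
  rintro ⟨y, hy⟩
  obtain ⟨x, rfl⟩ := hf y
  exact ⟨⟨x, hy⟩, rfl⟩

lemma bddAbove_SecSet (G : Type*) [Group G] [Finite G] : BddAbove (SecSet G) := by
  refine ⟨Nat.card G, ?_⟩
  rintro m ⟨h5, H, φ, hφ⟩
  have h1 : Nat.card (alternatingGroup (Fin m)) ≤ Nat.card H :=
    Nat.card_le_card_of_surjective φ hφ
  have h2 : Nat.card H ≤ Nat.card G := Nat.card_le_card_of_injective _ Subtype.coe_injective
  refine le_trans (le_trans ?_ h1) h2
  -- m ≤ card A_m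
  have : Nontrivial (Fin m) := Fin.nontrivial_iff_two_le.mpr (by omega)
  have hc : 2 * Fintype.card (alternatingGroup (Fin m)) = Fintype.card (Equiv.Perm (Fin m)) :=
    two_mul_card_alternatingGroup
  rw [Fintype.card_perm, Fintype.card_fin] at hc
  have hm : 2 * m ≤ m.factorial := by
    obtain ⟨k, rfl⟩ : ∃ k, m = k + 1 := ⟨m - 1, by omega⟩
    rw [Nat.factorial_succ, mul_comm]
    have : 2 ≤ k.factorial := le_trans (by omega) (Nat.self_le_factorial k)
    exact Nat.mul_le_mul_left _ this
  rw [Nat.card_eq_fintype_card]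
  omega

lemma SecSet_subset_union (G : Type*) [Group G] (N : Subgroup G) [N.Normal] :
    SecSet G ⊆ SecSet N ∪ SecSet (G ⧸ N) := by
  rintro m ⟨h5, H, φ, hφ⟩
  haveI : IsSimpleGroup (alternatingGroup (Fin m)) := alt_simple h5
  set M : Subgroup H := N.subgroupOf H with hM
  haveI : M.Normal := Subgroup.normal_subgroupOf
  have hP : (M.map φ).Normal := Subgroup.Normal.map this φ hφ
  rcases hP.eq_bot_or_eq_top with hbot | htop
  · -- section of G ⧸ N
    right
    refine ⟨h5, H.map (QuotientGroup.mk' N), ?_⟩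
    set π := (QuotientGroup.mk' N).subgroupMap H with hπdef
    have hπ : Surjective π := (QuotientGroup.mk' N).subgroupMap_surjective H
    have hker : ∀ x ∈ π.ker, φ x = 1 := by
      intro x hx
      have hxN : (x : G) ∈ N := by
        have : π x = 1 := hx
        rw [Subtype.ext_iff] at this
        simpa [hπdef, QuotientGroup.eq_one_iff] using this
      have : φ x ∈ M.map φ := ⟨x, hxN, rfl⟩
      rw [hbot] at this
      simpa using this
    refine ⟨(QuotientGroup.lift π.ker φ hker).comp
      (QuotientGroup.quotientKerEquivOfSurjective π hπ).symm.toMonoidHom, ?_⟩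
    rw [MonoidHom.coe_comp, MulEquiv.coe_toMonoidHom]
    refine Surjective.comp ?_ (MulEquiv.surjective _)
    intro a
    obtain ⟨x, rfl⟩ := hφ a
    exact ⟨QuotientGroup.mk x, rfl⟩
  · -- section of N
    left
    have hJN : M.map H.subtype ≤ N := by
      rw [hM, Subgroup.subgroupOf_map_subtype]
      exact inf_le_left
    refine ⟨h5, (M.map H.subtype).subgroupOf N, ?_⟩
    have e1 : (M.map H.subtype).subgroupOf N ≃* M.map H.subtype :=
      Subgroup.subgroupOfEquivOfLe hJN
    have e2 : M ≃* M.map H.subtype :=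
      M.equivMapOfInjective H.subtype H.subtype_injective
    refine ⟨(φ.comp M.subtype).comp ((e1.trans e2.symm).toMonoidHom), ?_⟩
    rw [MonoidHom.coe_comp, MulEquiv.coe_toMonoidHom]
    refine Surjective.comp ?_ (MulEquiv.surjective _)
    intro a
    have : a ∈ M.map φ := htop ▸ Subgroup.mem_top a
    obtain ⟨x, hxM, hx⟩ := this
    exact ⟨⟨x, hxM⟩, hx⟩

lemma sSup_union_max {A B : Set ℕ} (hA : BddAbove A) (hB : BddAbove B) :
    sSup (A ∪ B) = max (sSup A) (sSup B) := by
  rcases A.eq_empty_or_nonempty with rfl | hAne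
  · rcases B.eq_empty_or_nonempty with rfl | hBne
    · simp
    · simp [csSup_empty]
  · rcases B.eq_empty_or_nonempty with rfl | hBne
    · simp [csSup_empty]
    · rw [csSup_union hA hAne hB hBne]

theorem mSec_eq_max (G : Type) [Group G] [Finite G] (N : Subgroup G) [N.Normal] :
    mSec G = max (mSec N) (mSec (G ⧸ N)) := by
  rw [mSec_eq, mSec_eq, mSec_eq]
  have hset : SecSet G = SecSet N ∪ SecSet (G ⧸ N) := by
    apply le_antisymm
    · exact SecSet_subset_union G N
    · rintro m (hm | hm)
      · exact SecSet_subset_of_injective N.subtype N.subtype_injective hm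
      · exact SecSet_subset_of_surjective (QuotientGroup.mk' N)
          (QuotientGroup.mk'_surjective N) hm
  rw [hset]
  exact sSup_union_max (bddAbove_SecSet N) (bddAbove_SecSet (G ⧸ N))

end MSecMain
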